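/- With A, Ã, Â as in the splitting Ã(i,i) = 1/2 - b_i - b_{i-1}, Ã(i,i+2) = c_i and Â(i,i) = 1/2 - c_i - c_{i-2}, Â(i,i+1) = b_i: if A is diagonally dominant (a_i ≥ b_{i-1} + b_i + c_{i-2} + c_i for all i), then both Ã and Â are diagonally dominant with non-negative diagonal entries, and hence both are positive semidefinite. -/
import Mathlib


open Matrix

/-- An `n × n` real matrix is doubly stochastic if it is entrywise non-negative
and every row sum and column sum equals 1. -/
def IsDoublyStochastic {n : ℕ} (A : Matrix (Fin n) (Fin n) ℝ) : Prop :=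
  (∀ i j, 0 ≤ A i j) ∧ (∀ i, ∑ j, A i j = 1) ∧ (∀ j, ∑ i, A i j = 1)

/-- A matrix is pentadiagonal if `A i j = 0` whenever `|i - j| ≥ 3`. -/
def IsPentadiagonal {n : ℕ} (A : Matrix (Fin n) (Fin n) ℝ) : Prop :=
  ∀ i j : Fin n, 3 ≤ |(i : ℤ) - (j : ℤ)| → A i j = 0

/-- First superdiagonal entries `b_k = A (k, k+1)` in the 1-based indexing of the paper,
with the convention that out-of-range indices give `0`. -/
def bEnt {n : ℕ} (A : Matrix (Fin n) (Fin n) ℝ) (k : ℕ) : ℝ :=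
  if h : 1 ≤ k ∧ k < n then A ⟨k - 1, by omega⟩ ⟨k, h.2⟩ else 0

/-- Second superdiagonal entries `c_k = A (k, k+2)` in the 1-based indexing of the paper,
with the convention that out-of-range indices give `0`. -/
def cEnt {n : ℕ} (A : Matrix (Fin n) (Fin n) ℝ) (k : ℕ) : ℝ :=
  if h : 1 ≤ k ∧ k + 1 < n then A ⟨k - 1, by omega⟩ ⟨k + 1, h.2⟩ else 0

/-- The matrix `Ã` of the splitting: `Ã(i,i) = 1/2 - b_i - b_{i-1}`,
`Ã(i,i+2) = Ã(i+2,i) = c_i`, all other entries `0` (1-based indexing). -/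
noncomputable def Atil {n : ℕ} (A : Matrix (Fin n) (Fin n) ℝ) : Matrix (Fin n) (Fin n) ℝ :=
  Matrix.of fun i j =>
    if (i : ℕ) = (j : ℕ) then 1 / 2 - bEnt A ((i : ℕ) + 1) - bEnt A (i : ℕ)
    else if (i : ℕ) + 2 = (j : ℕ) then cEnt A ((i : ℕ) + 1)
    else if (j : ℕ) + 2 = (i : ℕ) then cEnt A ((j : ℕ) + 1)
    else 0

/-- The matrix `Â` of the splitting: `Â(i,i) = 1/2 - c_i - c_{i-2}`,
`Â(i,i+1) = Â(i+1,i) = b_i`, all other entries `0` (1-based indexing). -/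
noncomputable def Ahat {n : ℕ} (A : Matrix (Fin n) (Fin n) ℝ) : Matrix (Fin n) (Fin n) ℝ :=
  Matrix.of fun i j =>
    if (i : ℕ) = (j : ℕ) then 1 / 2 - cEnt A ((i : ℕ) + 1) - cEnt A ((i : ℕ) - 1)
    else if (i : ℕ) + 1 = (j : ℕ) then bEnt A ((i : ℕ) + 1)
    else if (j : ℕ) + 1 = (i : ℕ) then bEnt A ((j : ℕ) + 1)
    else 0


lemma sum_erase_eq_sum_if {α : Type*} [Fintype α] [DecidableEq α] (i : α) (g : α → ℝ) :
    ∑ j ∈ Finset.univ.erase i, g j = ∑ j, if j = i then 0 else g j := by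
  symm
  rw [Finset.sum_ite]
  simp [Finset.filter_ne']

lemma psd_of_diagdom {n : ℕ} (M : Matrix (Fin n) (Fin n) ℝ) (hsym : Mᵀ = M)
    (hdom : ∀ i, ∑ j ∈ Finset.univ.erase i, |M i j| ≤ M i i) (x : Fin n → ℝ) :
    0 ≤ x ⬝ᵥ M.mulVec x := by
  have hsym' : ∀ i j, M j i = M i j := fun i j => by
    rw [← congrFun (congrFun hsym i) j]; rfl
  have expand : x ⬝ᵥ M.mulVec x = ∑ i, ∑ j, x i * M i j * x j := by
    simp [dotProduct, Matrix.mulVec, Finset.mul_sum, mul_assoc]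
  rw [expand]
  set L : Fin n → Fin n → ℝ := fun i j =>
    if i = j then M i i * x i ^ 2 else -(|M i j| * (x i ^ 2 + x j ^ 2) / 2) with hLdef
  have hL : ∀ i j, L i j ≤ x i * M i j * x j := by
    intro i j
    by_cases h : i = j
    · subst h; simp only [hLdef, if_pos rfl]; exact le_of_eq (by ring)
    · simp only [hLdef, if_neg h]
      have h1 : |x i * M i j * x j| ≤ |M i j| * (x i ^ 2 + x j ^ 2) / 2 := by
        rw [abs_mul, abs_mul]
        nlinarith [sq_nonneg (|x i| - |x j|), sq_abs (x i), sq_abs (x j),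
          abs_nonneg (M i j), abs_nonneg (x i), abs_nonneg (x j)]
      have h2 := neg_abs_le (x i * M i j * x j)
      linarith
  have step1 : ∑ i, ∑ j, L i j ≤ ∑ i, ∑ j, x i * M i j * x j :=
    Finset.sum_le_sum fun i _ => Finset.sum_le_sum fun j _ => hL i j
  refine le_trans ?_ step1
  have inner_eq : ∀ i : Fin n, ∑ j, L i j
      = M i i * x i ^ 2 - ∑ j ∈ Finset.univ.erase i, |M i j| * (x i ^ 2 + x j ^ 2) / 2 := by
    intro i
    rw [← Finset.add_sum_erase Finset.univ (L i) (Finset.mem_univ i)]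
    simp only [hLdef, if_pos rfl]
    rw [sub_eq_add_neg, ← Finset.sum_neg_distrib]
    congr 1
    refine Finset.sum_congr rfl fun j hj => ?_
    rw [if_neg (Finset.ne_of_mem_erase hj).symm]
  have T_eq : ∑ i, ∑ j ∈ Finset.univ.erase i, |M i j| * (x i ^ 2 + x j ^ 2) / 2
      = ∑ i, (∑ j ∈ Finset.univ.erase i, |M i j|) * x i ^ 2 := by
    have split : ∀ i : Fin n, ∑ j ∈ Finset.univ.erase i, |M i j| * (x i ^ 2 + x j ^ 2) / 2
        = (∑ j ∈ Finset.univ.erase i, |M i j| * x i ^ 2 / 2)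
          + ∑ j ∈ Finset.univ.erase i, |M i j| * x j ^ 2 / 2 := by
      intro i
      rw [← Finset.sum_add_distrib]
      exact Finset.sum_congr rfl fun j _ => by ring
    have swap : ∑ i, ∑ j ∈ Finset.univ.erase i, |M i j| * x j ^ 2 / 2
        = ∑ i, ∑ j ∈ Finset.univ.erase i, |M i j| * x i ^ 2 / 2 := by
      calc ∑ i, ∑ j ∈ Finset.univ.erase i, |M i j| * x j ^ 2 / 2
          = ∑ i : Fin n, ∑ j : Fin n, if j = i then 0 else |M i j| * x j ^ 2 / 2 := by
            exact Finset.sum_congr rfl fun i _ => sum_erase_eq_sum_if i _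
        _ = ∑ j : Fin n, ∑ i : Fin n, if j = i then 0 else |M i j| * x j ^ 2 / 2 :=
            Finset.sum_comm
        _ = ∑ j : Fin n, ∑ i : Fin n, if i = j then 0 else |M j i| * x j ^ 2 / 2 := by
            refine Finset.sum_congr rfl fun j _ => Finset.sum_congr rfl fun i _ => ?_
            rw [hsym']
            exact if_congr eq_comm rfl rfl
        _ = ∑ j, ∑ i ∈ Finset.univ.erase j, |M j i| * x j ^ 2 / 2 := by
            exact Finset.sum_congr rfl fun j _ => (sum_erase_eq_sum_if j _).symm
    calc ∑ i, ∑ j ∈ Finset.univ.erase i, |M i j| * (x i ^ 2 + x j ^ 2) / 2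
        = ∑ i, ((∑ j ∈ Finset.univ.erase i, |M i j| * x i ^ 2 / 2)
            + ∑ j ∈ Finset.univ.erase i, |M i j| * x j ^ 2 / 2) :=
          Finset.sum_congr rfl fun i _ => split i
      _ = (∑ i, ∑ j ∈ Finset.univ.erase i, |M i j| * x i ^ 2 / 2)
            + ∑ i, ∑ j ∈ Finset.univ.erase i, |M i j| * x j ^ 2 / 2 :=
          Finset.sum_add_distrib
      _ = (∑ i, ∑ j ∈ Finset.univ.erase i, |M i j| * x i ^ 2 / 2)
            + ∑ i, ∑ j ∈ Finset.univ.erase i, |M i j| * x i ^ 2 / 2 := by rw [swap]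
      _ = ∑ i, (∑ j ∈ Finset.univ.erase i, |M i j|) * x i ^ 2 := by
          rw [← Finset.sum_add_distrib]
          refine Finset.sum_congr rfl fun i _ => ?_
          rw [← Finset.sum_add_distrib, Finset.sum_mul]
          refine Finset.sum_congr rfl fun j _ => by ring
  calc (0:ℝ) ≤ ∑ i, (M i i - ∑ j ∈ Finset.univ.erase i, |M i j|) * x i ^ 2 := by
        refine Finset.sum_nonneg fun i _ => mul_nonneg (by linarith [hdom i]) (sq_nonneg _)
    _ = ∑ i, ∑ j, L i j := by
        rw [Finset.sum_congr rfl fun i (_ : i ∈ Finset.univ) => inner_eq i]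
        rw [Finset.sum_sub_distrib, T_eq, ← Finset.sum_sub_distrib]
        exact Finset.sum_congr rfl fun i _ => by ring

lemma bEnt_nonneg {n : ℕ} {A : Matrix (Fin n) (Fin n) ℝ} (hA : ∀ i j, 0 ≤ A i j) (k : ℕ) :
    0 ≤ bEnt A k := by
  unfold bEnt; split
  · exact hA _ _
  · exact le_refl 0

lemma cEnt_nonneg {n : ℕ} {A : Matrix (Fin n) (Fin n) ℝ} (hA : ∀ i j, 0 ≤ A i j) (k : ℕ) :
    0 ≤ cEnt A k := by
  unfold cEnt; split
  · exact hA _ _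
  · exact le_refl 0

lemma bEnt_zero_of_ge {n : ℕ} (A : Matrix (Fin n) (Fin n) ℝ) {k : ℕ} (h : ¬ (1 ≤ k ∧ k < n)) :
    bEnt A k = 0 := by unfold bEnt; rw [dif_neg h]

lemma cEnt_zero_of_ge {n : ℕ} (A : Matrix (Fin n) (Fin n) ℝ) {k : ℕ} (h : ¬ (1 ≤ k ∧ k + 1 < n)) :
    cEnt A k = 0 := by unfold cEnt; rw [dif_neg h]

lemma A_congr {n : ℕ} (A : Matrix (Fin n) (Fin n) ℝ) {a b c d : Fin n}
    (h1 : (a : ℕ) = (c : ℕ)) (h2 : (b : ℕ) = (d : ℕ)) : A a b = A c d := by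
  rw [show a = c from Fin.ext h1, show b = d from Fin.ext h2]

lemma sum_if_val {n : ℕ} (k : ℕ) (c : ℝ) :
    ∑ j : Fin n, (if (j : ℕ) = k then c else 0) = if k < n then c else 0 := by
  by_cases h : k < n
  · rw [if_pos h, Finset.sum_eq_single_of_mem (⟨k, h⟩ : Fin n) (Finset.mem_univ _)]
    · rw [if_pos rfl]
    · intro b _ hb
      exact if_neg fun hbk => hb (Fin.ext hbk)
  · rw [if_neg h]
    exact Finset.sum_eq_zero fun j _ => if_neg fun hj => h (lt_of_eq_of_lt hj.symm j.isLt)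

lemma sum_if_le {n : ℕ} (P : ℕ → Prop) [DecidablePred P] (c : ℝ) (hc : 0 ≤ c)
    (hP : ∀ a b : ℕ, P a → P b → a = b) :
    ∑ j : Fin n, (if P (j : ℕ) then c else 0) ≤ c := by
  by_cases hex : ∃ j : Fin n, P (j : ℕ)
  · obtain ⟨j0, hj0⟩ := hex
    rw [Finset.sum_eq_single_of_mem j0 (Finset.mem_univ _)
      (fun b _ hb => if_neg fun hPb => hb (Fin.ext (hP _ _ hPb hj0))), if_pos hj0]
  · rw [Finset.sum_eq_zero fun j _ => if_neg fun h => hex ⟨j, h⟩]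
    exact hc

lemma key_half {n : ℕ} (A : Matrix (Fin n) (Fin n) ℝ) (hsymm : Aᵀ = A)
    (hDS : IsDoublyStochastic A)
    (hdom : ∀ p : Fin n,
      bEnt A (p : ℕ) + bEnt A ((p : ℕ) + 1) + cEnt A ((p : ℕ) - 1) + cEnt A ((p : ℕ) + 1)
        ≤ A p p) (p : Fin n) :
    bEnt A (p : ℕ) + bEnt A ((p : ℕ) + 1) + cEnt A ((p : ℕ) - 1) + cEnt A ((p : ℕ) + 1)
      ≤ 1 / 2 := by
  obtain ⟨hpos, hrow, -⟩ := hDS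
  have hsym' : ∀ i j, A j i = A i j := fun i j => by
    rw [← congrFun (congrFun hsymm i) j]; rfl
  set g : Fin n → ℝ := fun j =>
    (if (j : ℕ) = (p : ℕ) then A p p else 0)
    + (if (j : ℕ) + 1 = (p : ℕ) then bEnt A (p : ℕ) else 0)
    + (if (j : ℕ) = (p : ℕ) + 1 then bEnt A ((p : ℕ) + 1) else 0)
    + (if (j : ℕ) + 2 = (p : ℕ) then cEnt A ((p : ℕ) - 1) else 0)
    + (if (j : ℕ) = (p : ℕ) + 2 then cEnt A ((p : ℕ) + 1) else 0) with hgdef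
  have hg_le : ∀ j, g j ≤ A p j := by
    intro j
    simp only [hgdef]
    by_cases h1 : (j : ℕ) = (p : ℕ)
    · rw [if_pos h1, if_neg (by omega), if_neg (by omega), if_neg (by omega),
        if_neg (by omega)]
      have : A p p = A p j := A_congr A rfl h1.symm
      linarith
    · rw [if_neg h1]
      by_cases h2 : (j : ℕ) + 1 = (p : ℕ)
      · rw [if_pos h2, if_neg (by omega), if_neg (by omega), if_neg (by omega)]
        have hc : 1 ≤ (p : ℕ) ∧ (p : ℕ) < n := ⟨by omega, p.isLt⟩
        have : bEnt A (p : ℕ) = A p j := by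
          rw [bEnt, dif_pos hc, ← hsym' p j]
          exact A_congr A (by simp; omega) (by simp)
        linarith
      · rw [if_neg h2]
        by_cases h3 : (j : ℕ) = (p : ℕ) + 1
        · rw [if_pos h3, if_neg (by omega), if_neg (by omega)]
          have hc : 1 ≤ (p : ℕ) + 1 ∧ (p : ℕ) + 1 < n := ⟨by omega, by rw [← h3]; exact j.isLt⟩
          have : bEnt A ((p : ℕ) + 1) = A p j := by
            rw [bEnt, dif_pos hc]
            exact A_congr A (by simp) (by simp; omega)
          linarith
        · rw [if_neg h3]
          by_cases h4 : (j : ℕ) + 2 = (p : ℕ)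
          · rw [if_pos h4, if_neg (by omega)]
            have hc : 1 ≤ (p : ℕ) - 1 ∧ ((p : ℕ) - 1) + 1 < n := ⟨by omega, by
              have := p.isLt; omega⟩
            have : cEnt A ((p : ℕ) - 1) = A p j := by
              rw [cEnt, dif_pos hc, ← hsym' p j]
              exact A_congr A (by simp; omega) (by simp; omega)
            linarith
          · rw [if_neg h4]
            by_cases h5 : (j : ℕ) = (p : ℕ) + 2
            · rw [if_pos h5]
              have hc : 1 ≤ (p : ℕ) + 1 ∧ ((p : ℕ) + 1) + 1 < n := ⟨by omega, by
                rw [show (p:ℕ)+1+1 = (p:ℕ)+2 by omega, ← h5]; exact j.isLt⟩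
              have : cEnt A ((p : ℕ) + 1) = A p j := by
                rw [cEnt, dif_pos hc]
                exact A_congr A (by simp) (by simp; omega)
              linarith
            · rw [if_neg h5]
              simpa using hpos p j
  have hg_sum : ∑ j, g j
      = A p p + (bEnt A (p : ℕ) + bEnt A ((p : ℕ) + 1)
          + cEnt A ((p : ℕ) - 1) + cEnt A ((p : ℕ) + 1)) := by
    simp only [hgdef]
    rw [Finset.sum_add_distrib, Finset.sum_add_distrib, Finset.sum_add_distrib,
      Finset.sum_add_distrib]
    have e1 : ∑ j : Fin n, (if (j : ℕ) = (p : ℕ) then A p p else 0) = A p p := by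
      rw [sum_if_val, if_pos p.isLt]
    have e2 : ∑ j : Fin n, (if (j : ℕ) + 1 = (p : ℕ) then bEnt A (p : ℕ) else 0)
        = bEnt A (p : ℕ) := by
      rcases Nat.eq_zero_or_pos (p : ℕ) with hp | hp
      · rw [Finset.sum_eq_zero fun j _ => if_neg (by omega),
          bEnt_zero_of_ge A (by omega)]
      · obtain ⟨m, hm⟩ : ∃ m, (p : ℕ) = m + 1 := ⟨(p : ℕ) - 1, by omega⟩
        have hmn : m < n := by have := p.isLt; omega
        calc ∑ j : Fin n, (if (j : ℕ) + 1 = (p : ℕ) then bEnt A (p : ℕ) else 0)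
            = ∑ j : Fin n, (if (j : ℕ) = m then bEnt A (p : ℕ) else 0) :=
              Finset.sum_congr rfl fun j _ => if_congr (by omega) rfl rfl
          _ = bEnt A (p : ℕ) := by rw [sum_if_val, if_pos hmn]
    have e3 : ∑ j : Fin n, (if (j : ℕ) = (p : ℕ) + 1 then bEnt A ((p : ℕ) + 1) else 0)
        = bEnt A ((p : ℕ) + 1) := by
      rw [sum_if_val]
      by_cases h : (p : ℕ) + 1 < n
      · rw [if_pos h]
      · rw [if_neg h, bEnt_zero_of_ge A (by omega)]
    have e4 : ∑ j : Fin n, (if (j : ℕ) + 2 = (p : ℕ) then cEnt A ((p : ℕ) - 1) else 0)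
        = cEnt A ((p : ℕ) - 1) := by
      by_cases hp : 2 ≤ (p : ℕ)
      · obtain ⟨m, hm⟩ : ∃ m, (p : ℕ) = m + 2 := ⟨(p : ℕ) - 2, by omega⟩
        have hmn : m < n := by have := p.isLt; omega
        calc ∑ j : Fin n, (if (j : ℕ) + 2 = (p : ℕ) then cEnt A ((p : ℕ) - 1) else 0)
            = ∑ j : Fin n, (if (j : ℕ) = m then cEnt A ((p : ℕ) - 1) else 0) :=
              Finset.sum_congr rfl fun j _ => if_congr (by omega) rfl rfl
          _ = cEnt A ((p : ℕ) - 1) := by rw [sum_if_val, if_pos hmn]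
      · rw [Finset.sum_eq_zero fun j _ => if_neg (by omega),
          cEnt_zero_of_ge A (by omega)]
    have e5 : ∑ j : Fin n, (if (j : ℕ) = (p : ℕ) + 2 then cEnt A ((p : ℕ) + 1) else 0)
        = cEnt A ((p : ℕ) + 1) := by
      rw [sum_if_val]
      by_cases h : (p : ℕ) + 2 < n
      · rw [if_pos h]
      · rw [if_neg h, cEnt_zero_of_ge A (by omega)]
    rw [e1, e2, e3, e4, e5]; ring
  have hsum_le : ∑ j, g j ≤ 1 := by
    rw [← hrow p]
    exact Finset.sum_le_sum fun j _ => hg_le j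
  rw [hg_sum] at hsum_le
  have := hdom p
  linarith

lemma Atil_symm {n : ℕ} (A : Matrix (Fin n) (Fin n) ℝ) : (Atil A)ᵀ = Atil A := by
  ext i j
  show Atil A j i = Atil A i j
  unfold Atil
  simp only [Matrix.of_apply]
  by_cases h1 : (i : ℕ) = (j : ℕ)
  · rw [if_pos h1.symm, if_pos h1, h1]
  · rw [if_neg (fun e => h1 e.symm), if_neg h1]
    by_cases h2 : (i : ℕ) + 2 = (j : ℕ)
    · rw [if_neg (show ¬((j : ℕ) + 2 = (i : ℕ)) by omega), if_pos h2]
      simp [h2]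
    · by_cases h3 : (j : ℕ) + 2 = (i : ℕ)
      · rw [if_pos h3, if_neg h2]
        simp [h3]
      · rw [if_neg h3, if_neg h2]
        simp [h2, h3]

lemma Ahat_symm {n : ℕ} (A : Matrix (Fin n) (Fin n) ℝ) : (Ahat A)ᵀ = Ahat A := by
  ext i j
  show Ahat A j i = Ahat A i j
  unfold Ahat
  simp only [Matrix.of_apply]
  by_cases h1 : (i : ℕ) = (j : ℕ)
  · rw [if_pos h1.symm, if_pos h1, h1]
  · rw [if_neg (fun e => h1 e.symm), if_neg h1]
    by_cases h2 : (i : ℕ) + 1 = (j : ℕ)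
    · rw [if_neg (show ¬((j : ℕ) + 1 = (i : ℕ)) by omega), if_pos h2]
      simp [h2]
    · by_cases h3 : (j : ℕ) + 1 = (i : ℕ)
      · rw [if_pos h3, if_neg h2]
        simp [h3]
      · rw [if_neg h3, if_neg h2]
        simp [h2, h3]

lemma Atil_offdiag_sum {n : ℕ} (A : Matrix (Fin n) (Fin n) ℝ)
    (hpos : ∀ i j, 0 ≤ A i j) (i : Fin n) :
    ∑ j ∈ Finset.univ.erase i, |Atil A i j|
      ≤ cEnt A ((i : ℕ) + 1) + cEnt A ((i : ℕ) - 1) := by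
  set R : Fin n → ℝ := fun j =>
    (if (j : ℕ) = (i : ℕ) + 2 then cEnt A ((i : ℕ) + 1) else 0)
    + (if (j : ℕ) + 2 = (i : ℕ) then cEnt A ((i : ℕ) - 1) else 0) with hRdef
  have hRnn : ∀ j, 0 ≤ R j := by
    intro j
    simp only [hRdef]
    have := cEnt_nonneg hpos ((i : ℕ) + 1)
    have := cEnt_nonneg hpos ((i : ℕ) - 1)
    split <;> split <;> simp <;> linarith
  have hb : ∀ j ∈ Finset.univ.erase i, |Atil A i j| ≤ R j := by
    intro j hj
    have hne : (j : ℕ) ≠ (i : ℕ) := fun h => (Finset.ne_of_mem_erase hj) (Fin.ext h)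
    simp only [hRdef]
    unfold Atil
    simp only [Matrix.of_apply]
    rw [if_neg (fun h => hne h.symm)]
    by_cases h2 : (i : ℕ) + 2 = (j : ℕ)
    · rw [if_pos h2, if_pos h2.symm, if_neg (by omega),
        abs_of_nonneg (cEnt_nonneg hpos _)]
      simp
    · have h2' : ¬((j : ℕ) = (i : ℕ) + 2) := fun e => h2 e.symm
      rw [if_neg h2, if_neg h2']
      by_cases h3 : (j : ℕ) + 2 = (i : ℕ)
      · rw [if_pos h3, show (j : ℕ) + 1 = (i : ℕ) - 1 by omega,
          abs_of_nonneg (cEnt_nonneg hpos _)]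
        simp [h3]
      · rw [if_neg h3, abs_zero]
        simp [h3]
  calc ∑ j ∈ Finset.univ.erase i, |Atil A i j| ≤ ∑ j ∈ Finset.univ.erase i, R j :=
        Finset.sum_le_sum hb
    _ ≤ ∑ j, R j :=
        Finset.sum_le_sum_of_subset_of_nonneg (Finset.subset_univ _)
          (fun j _ _ => hRnn j)
    _ = (∑ j : Fin n, if (j : ℕ) = (i : ℕ) + 2 then cEnt A ((i : ℕ) + 1) else 0)
        + ∑ j : Fin n, (if (j : ℕ) + 2 = (i : ℕ) then cEnt A ((i : ℕ) - 1) else 0) :=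
        Finset.sum_add_distrib
    _ ≤ cEnt A ((i : ℕ) + 1) + cEnt A ((i : ℕ) - 1) := by
        refine add_le_add ?_ ?_
        · exact sum_if_le (fun m => m = (i : ℕ) + 2) _ (cEnt_nonneg hpos _)
            (fun a b ha hb => by omega)
        · exact sum_if_le (fun m => m + 2 = (i : ℕ)) _ (cEnt_nonneg hpos _)
            (fun a b ha hb => by omega)

lemma Ahat_offdiag_sum {n : ℕ} (A : Matrix (Fin n) (Fin n) ℝ)
    (hpos : ∀ i j, 0 ≤ A i j) (i : Fin n) :
    ∑ j ∈ Finset.univ.erase i, |Ahat A i j|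
      ≤ bEnt A ((i : ℕ) + 1) + bEnt A (i : ℕ) := by
  set R : Fin n → ℝ := fun j =>
    (if (j : ℕ) = (i : ℕ) + 1 then bEnt A ((i : ℕ) + 1) else 0)
    + (if (j : ℕ) + 1 = (i : ℕ) then bEnt A (i : ℕ) else 0) with hRdef
  have hRnn : ∀ j, 0 ≤ R j := by
    intro j
    simp only [hRdef]
    have := bEnt_nonneg hpos ((i : ℕ) + 1)
    have := bEnt_nonneg hpos (i : ℕ)
    split <;> split <;> simp <;> linarith
  have hb : ∀ j ∈ Finset.univ.erase i, |Ahat A i j| ≤ R j := by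
    intro j hj
    have hne : (j : ℕ) ≠ (i : ℕ) := fun h => (Finset.ne_of_mem_erase hj) (Fin.ext h)
    simp only [hRdef]
    unfold Ahat
    simp only [Matrix.of_apply]
    rw [if_neg (fun h => hne h.symm)]
    by_cases h2 : (i : ℕ) + 1 = (j : ℕ)
    · rw [if_pos h2, if_pos h2.symm, if_neg (by omega),
        abs_of_nonneg (bEnt_nonneg hpos _)]
      simp
    · have h2' : ¬((j : ℕ) = (i : ℕ) + 1) := fun e => h2 e.symm
      rw [if_neg h2, if_neg h2']
      by_cases h3 : (j : ℕ) + 1 = (i : ℕ)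
      · rw [if_pos h3, h3, abs_of_nonneg (bEnt_nonneg hpos _)]
        simp [h3]
      · rw [if_neg h3, abs_zero]
        simp [h3]
  calc ∑ j ∈ Finset.univ.erase i, |Ahat A i j| ≤ ∑ j ∈ Finset.univ.erase i, R j :=
        Finset.sum_le_sum hb
    _ ≤ ∑ j, R j :=
        Finset.sum_le_sum_of_subset_of_nonneg (Finset.subset_univ _)
          (fun j _ _ => hRnn j)
    _ = (∑ j : Fin n, if (j : ℕ) = (i : ℕ) + 1 then bEnt A ((i : ℕ) + 1) else 0)
        + ∑ j : Fin n, (if (j : ℕ) + 1 = (i : ℕ) then bEnt A (i : ℕ) else 0) :=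
        Finset.sum_add_distrib
    _ ≤ bEnt A ((i : ℕ) + 1) + bEnt A (i : ℕ) := by
        refine add_le_add ?_ ?_
        · exact sum_if_le (fun m => m = (i : ℕ) + 1) _ (bEnt_nonneg hpos _)
            (fun a b ha hb => by omega)
        · exact sum_if_le (fun m => m + 1 = (i : ℕ)) _ (bEnt_nonneg hpos _)
            (fun a b ha hb => by omega)

/-- If the symmetric pentadiagonal doubly stochastic matrix `A` is diagonally dominant
(`a_i ≥ b_{i-1} + b_i + c_{i-2} + c_i` for all `i`), then both `Ã` and `Â` are diagonally
dominant with non-negative diagonal entries, and hence both are positive semidefinite. -/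
theorem Atil_Ahat_diagDom_posSemidef {n : ℕ} (A : Matrix (Fin n) (Fin n) ℝ)
    (hsymm : Aᵀ = A) (hDS : IsDoublyStochastic A) (hpenta : IsPentadiagonal A)
    (hdom : ∀ p : Fin n,
      bEnt A (p : ℕ) + bEnt A ((p : ℕ) + 1) + cEnt A ((p : ℕ) - 1) + cEnt A ((p : ℕ) + 1)
        ≤ A p p) :
    ((∀ i : Fin n, 0 ≤ Atil A i i) ∧
      (∀ i : Fin n, ∑ j ∈ Finset.univ.erase i, |Atil A i j| ≤ Atil A i i) ∧
      ∀ x : Fin n → ℝ, 0 ≤ x ⬝ᵥ (Atil A).mulVec x) ∧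
    ((∀ i : Fin n, 0 ≤ Ahat A i i) ∧
      (∀ i : Fin n, ∑ j ∈ Finset.univ.erase i, |Ahat A i j| ≤ Ahat A i i) ∧
      ∀ x : Fin n → ℝ, 0 ≤ x ⬝ᵥ (Ahat A).mulVec x) := by

  have hpos := hDS.1
  have key := key_half A hsymm hDS hdom
  have diagT : ∀ i : Fin n,
      Atil A i i = 1 / 2 - bEnt A ((i : ℕ) + 1) - bEnt A (i : ℕ) := by
    intro i
    show (if (i : ℕ) = (i : ℕ) then _ else _) = _
    rw [if_pos rfl]
  have diagH : ∀ i : Fin n,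
      Ahat A i i = 1 / 2 - cEnt A ((i : ℕ) + 1) - cEnt A ((i : ℕ) - 1) := by
    intro i
    show (if (i : ℕ) = (i : ℕ) then _ else _) = _
    rw [if_pos rfl]
  have nonnegT : ∀ i : Fin n, 0 ≤ Atil A i i := by
    intro i
    rw [diagT i]
    have := cEnt_nonneg hpos ((i : ℕ) + 1)
    have := cEnt_nonneg hpos ((i : ℕ) - 1)
    linarith [key i]
  have domT : ∀ i : Fin n, ∑ j ∈ Finset.univ.erase i, |Atil A i j| ≤ Atil A i i := by
    intro i
    rw [diagT i]
    linarith [Atil_offdiag_sum A hpos i, key i]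
  have nonnegH : ∀ i : Fin n, 0 ≤ Ahat A i i := by
    intro i
    rw [diagH i]
    have := bEnt_nonneg hpos ((i : ℕ) + 1)
    have := bEnt_nonneg hpos (i : ℕ)
    linarith [key i]
  have domH : ∀ i : Fin n, ∑ j ∈ Finset.univ.erase i, |Ahat A i j| ≤ Ahat A i i := by
    intro i
    rw [diagH i]
    linarith [Ahat_offdiag_sum A hpos i, key i]
  exact ⟨⟨nonnegT, domT, psd_of_diagdom (Atil A) (Atil_symm A) domT⟩,
    ⟨nonnegH, domH, psd_of_diagdom (Ahat A) (Ahat_symm A) domH⟩⟩
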